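/- For natural numbers m ≥ 1 and 0 ≤ μ ≤ ⌊m/2⌋, the identity C(-m, μ)·C(-m-μ-1, ⌊m/2⌋-μ) = (-1)^{⌊m/2⌋} C(⌊m/2⌋, μ)·C(m+⌊m/2⌋, m)·m/(m+μ) holds, where C denotes the generalized binomial coefficient. -/

import Mathlib

open Nat


/-- Generalized binomial coefficient `C(x, j)` for an integer upper index. -/
def genBinom (x : ℤ) (j : ℕ) : ℚ :=
  (∏ i ∈ Finset.range j, ((x : ℚ) - i)) / (Nat.factorial j)

lemma prod_asc (n j : ℕ) :
    (∏ i ∈ Finset.range j, ((n : ℚ) + i)) = (n.ascFactorial j : ℚ) := by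
  induction j with
  | zero => simp
  | succ j ih =>
      rw [Finset.prod_range_succ, ih, Nat.ascFactorial_succ]
      push_cast
      ring

lemma gb_neg (n j : ℕ) :
    genBinom (-(n : ℤ)) j = (-1) ^ j * ((n + j - 1).choose j : ℚ) := by
  unfold genBinom
  have h1 : (∏ i ∈ Finset.range j, ((((-(n : ℤ)) : ℤ) : ℚ) - i))
      = (-1) ^ j * ∏ i ∈ Finset.range j, ((n : ℚ) + i) := by
    have hcongr : ∀ i ∈ Finset.range j, ((((-(n : ℤ)) : ℤ) : ℚ) - i)
        = -1 * ((n : ℚ) + i) := by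
      intro i _; push_cast; ring
    rw [Finset.prod_congr rfl hcongr, Finset.prod_mul_distrib, Finset.prod_const,
      Finset.card_range]
  rw [h1, prod_asc, Nat.ascFactorial_eq_factorial_mul_choose']
  have hj : ((j.factorial : ℚ)) ≠ 0 := by positivity
  push_cast
  field_simp

theorem stmt_18 (m μ : ℕ) (hm : 1 ≤ m) (h : μ ≤ m / 2) :
    genBinom (-(m:ℤ)) μ * genBinom (-(m:ℤ) - μ - 1) (m / 2 - μ) =
      (-1 : ℚ) ^ (m / 2) * (Nat.choose (m / 2) μ : ℚ) *
        (Nat.choose (m + m / 2) m : ℚ) * m / (m + μ) := by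
  obtain ⟨m', rfl⟩ : ∃ m', m = m' + 1 := ⟨m - 1, by omega⟩
  set m := m' + 1 with hmdef
  set k := m / 2 with hk
  have hkm : k ≤ m := Nat.div_le_self _ _
  have e1 : (-(m : ℤ) - μ - 1) = -(((m + μ + 1 : ℕ)) : ℤ) := by push_cast; ring
  rw [e1, gb_neg, gb_neg]
  have e2 : m + μ + 1 + (k - μ) - 1 = m + k := by omega
  have e3 : m + μ - 1 = m' + μ := by omega
  rw [e2, e3]
  -- signs
  have esign : ((-1 : ℚ)) ^ μ * ((-1 : ℚ)) ^ (k - μ) = (-1 : ℚ) ^ k := by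
    rw [← pow_add]; congr 1; omega
  have hc1 : ((m' + μ).choose μ : ℚ) = (m' + μ)! / (μ ! * m' !) := by
    rw [Nat.cast_choose ℚ (by omega), Nat.add_sub_cancel]
  have hc2 : ((m + k).choose (k - μ) : ℚ) = (m + k)! / ((k - μ)! * (m + μ)!) := by
    rw [Nat.cast_choose ℚ (by omega)]
    have : m + k - (k - μ) = m + μ := by omega
    rw [this]
  have hc3 : ((m + k).choose m : ℚ) = (m + k)! / (m ! * k !) := by
    rw [Nat.cast_choose ℚ (by omega), Nat.add_sub_cancel_left]
  have hc4 : ((k).choose μ : ℚ) = k ! / (μ ! * (k - μ)!) := Nat.cast_choose ℚ h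
  have hfs : ((m + μ)! : ℚ) = (m + μ) * ((m' + μ)! : ℚ) := by
    have : m + μ = (m' + μ) + 1 := by omega
    rw [this, Nat.factorial_succ]
    push_cast
    rw [hmdef]; push_cast; ring
  have hfm : ((m)! : ℚ) = (m : ℚ) * (m' ! : ℚ) := by
    rw [hmdef, Nat.factorial_succ]; push_cast; ring
  have h1 : ((m' + μ)! : ℚ) ≠ 0 := by positivity
  have h2 : ((k - μ)! : ℚ) ≠ 0 := by positivity
  have h3 : (μ ! : ℚ) ≠ 0 := by positivity
  have h4 : (m' ! : ℚ) ≠ 0 := by positivity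
  have h5 : (m ! : ℚ) ≠ 0 := by positivity
  have h6 : (k ! : ℚ) ≠ 0 := by positivity
  have h7 : ((m : ℚ) + μ) ≠ 0 := by positivity
  calc (-1 : ℚ) ^ μ * ((m' + μ).choose μ : ℚ) *
        ((-1 : ℚ) ^ (k - μ) * ((m + k).choose (k - μ) : ℚ))
      = ((-1 : ℚ) ^ μ * (-1 : ℚ) ^ (k - μ)) *
        (((m' + μ).choose μ : ℚ) * ((m + k).choose (k - μ) : ℚ)) := by ring
    _ = (-1 : ℚ) ^ k * (Nat.choose k μ : ℚ) * (Nat.choose (m + k) m : ℚ) * m / (m + μ) := by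
        rw [esign, hc1, hc2, hc3, hc4, hfs, hfm]
        field_simp
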